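/- Closure of the model under coordinatewise medians (Lemma 'Q median'): Let a hierarchical family of trees be given, with 0-consistent set Q. For all â, b̂, ĉ ∈ Q, the coordinatewise median tuple (m_{T_U}(â_U, b̂_U, ĉ_U))_{U∈𝒰} is 0-consistent, i.e. belongs to Q. -/

import Mathlib

/-- `a` and `b` lie in the same connected component of the tree `G` with the vertex `w`
deleted (equivalently: `a, b ≠ w` and `w` does not lie on the geodesic from `a` to `b`). -/
def treeSameComp {α : Type*} (G : SimpleGraph α) (w a b : α) : Prop :=
  a ≠ w ∧ b ≠ w ∧ G.dist a w + G.dist w b ≠ G.dist a b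

/-- `m` is the median of `a`, `b`, `c` in the tree `G`: it lies on all three
pairwise geodesics. -/
def IsTreeMedian {α : Type*} (G : SimpleGraph α) (a b c m : α) : Prop :=
  G.dist a m + G.dist m b = G.dist a b ∧
  G.dist a m + G.dist m c = G.dist a c ∧
  G.dist b m + G.dist m c = G.dist b c

/-- A hierarchical family of trees: a finite index set `Idx` of domains with relations
`⊏` (proper nesting) and `⊥` (orthogonality), a finite simplicial tree `G U` on the
finite vertex set `Vtx U` for each domain `U`, marked vertices labeled by the finite set
`F`, and relative projection data `δup`/`δdown` satisfying coherence, bounded geodesic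
image, and consistency of the marked tuples. -/
structure HFT (Idx : Type*) [Fintype Idx] (Vtx : Idx → Type*) [∀ U, Fintype (Vtx U)]
    (F : Type*) [Fintype F] where
  /-- proper nesting `⊏` -/
  pnest : Idx → Idx → Prop
  /-- orthogonality `⊥` -/
  orth : Idx → Idx → Prop
  pnest_irrefl : ∀ U, ¬ pnest U U
  pnest_trans : ∀ U V W, pnest U V → pnest V W → pnest U W
  /-- `⊏` has a unique maximal element -/
  max_unique : ∃! m : Idx, ∀ W, ¬ pnest m W
  orth_symm : ∀ U V, orth U V → orth V U
  orth_irrefl : ∀ U, ¬ orth U U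
  orth_not_pnest : ∀ U V, orth U V → ¬ pnest U V
  /-- the tree associated to each domain -/
  G : (U : Idx) → SimpleGraph (Vtx U)
  tree : ∀ U, (G U).IsTree
  /-- the marked vertex of `T_U` labeled by `f : F` -/
  mark : (U : Idx) → F → Vtx U
  /-- every leaf is marked -/
  leaf_marked : ∀ (U : Idx) (v : Vtx U),
    Set.Subsingleton {w : Vtx U | (G U).Adj v w} → ∃ f : F, mark U f = v
  /-- the relative projection vertex `δup V U = δ^V_U ∈ T_U`
  (relevant when `V ⊏ U` or `V ⋔ U`) -/
  δup : (V U : Idx) → Vtx U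
  /-- the relative projection map `δdown U V = δ^U_V : T_U → T_V` (for `V ⊏ U`) -/
  δdown : (U V : Idx) → Vtx U → Vtx V
  /-- every component of `T_U − δ^V_U` contains a marked vertex -/
  comp_marked : ∀ V U : Idx,
    (pnest V U ∨ (V ≠ U ∧ ¬ pnest V U ∧ ¬ pnest U V ∧ ¬ orth V U)) →
    ∀ a : Vtx U, a ≠ δup V U → ∃ f : F, treeSameComp (G U) (δup V U) a (mark U f)
  /-- `δ^U_W = δ^V_W` whenever `U ⊥ V`, `V ⊏ W`, and `U ⊏ W` or `U ⋔ W` -/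
  δ_coherent : ∀ U V W : Idx, orth U V → pnest V W →
    (pnest U W ∨ (U ≠ W ∧ ¬ pnest U W ∧ ¬ pnest W U ∧ ¬ orth U W)) →
    δup U W = δup V W
  /-- bounded geodesic image: `δ^U_V` is constant on each component of `T_U − δ^V_U` … -/
  bgi_const : ∀ U V : Idx, pnest V U → ∀ a b : Vtx U,
    treeSameComp (G U) (δup V U) a b → δdown U V a = δdown U V b
  /-- … with value `f̂_V` on the component containing `f̂_U` -/
  bgi_mark : ∀ U V : Idx, pnest V U → ∀ f : F,
    mark U f ≠ δup V U → δdown U V (mark U f) = mark V f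
  /-- the marked tuples are 0-consistent (transverse case) -/
  mark_consistent_t : ∀ (f : F) (U V : Idx),
    (U ≠ V ∧ ¬ pnest U V ∧ ¬ pnest V U ∧ ¬ orth U V) →
    mark U f = δup V U ∨ mark V f = δup U V
  /-- the marked tuples are 0-consistent (nested case) -/
  mark_consistent_n : ∀ (f : F) (U V : Idx), pnest V U →
    mark U f = δup V U ∨ mark V f = δdown U V (mark U f)

namespace HFT

variable {Idx : Type*} [Fintype Idx] {Vtx : Idx → Type*} [∀ U, Fintype (Vtx U)]
  {F : Type*} [Fintype F]

/-- Transversality `U ⋔ V`: distinct, not nested either way, not orthogonal. -/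
def transv (H : HFT Idx Vtx F) (U V : Idx) : Prop :=
  U ≠ V ∧ ¬ H.pnest U V ∧ ¬ H.pnest V U ∧ ¬ H.orth U V

/-- A tuple of vertices is 0-consistent. -/
def ZeroConsistent (H : HFT Idx Vtx F) (x : ∀ U, Vtx U) : Prop :=
  (∀ U V, H.transv U V → x U = H.δup V U ∨ x V = H.δup U V) ∧
  (∀ U V, H.pnest V U → x U = H.δup V U ∨ x V = H.δdown U V (x U))

/-- The set `Q` of all 0-consistent tuples. -/
def Q (H : HFT Idx Vtx F) : Set (∀ U, Vtx U) := {x | H.ZeroConsistent x}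

/-- The ℓ¹ metric on tuples: `d_Q(x, y) = Σ_U d_{T_U}(x_U, y_U)`. -/
noncomputable def dQ (H : HFT Idx Vtx F) (x y : ∀ U, Vtx U) : ℕ :=
  ∑ U : Idx, (H.G U).dist (x U) (y U)

/-- The half-tree of the edge `{u, v}` of `T_U` on the `u`-side: the vertices strictly
closer to `u` than to `v`. -/
def halfTree (H : HFT Idx Vtx F) (U : Idx) (u v : Vtx U) : Set (Vtx U) :=
  {w | (H.G U).dist w u < (H.G U).dist w v}

/-- The half-space of `Q` determined by the half-tree of `{u, v} ⊆ T_U` on the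
`u`-side. -/
def halfSpace (H : HFT Idx Vtx F) (U : Idx) (u v : Vtx U) : Set (∀ W, Vtx W) :=
  {x | x ∈ H.Q ∧ x U ∈ H.halfTree U u v}

/-- Two walls (dual to the edge `{u, v}` of `T_U` and the edge `{u', v'}` of `T_V`)
cross: all four intersections of half-spaces are nonempty. -/
def Crosses (H : HFT Idx Vtx F) (U : Idx) (u v : Vtx U) (V : Idx) (u' v' : Vtx V) :
    Prop :=
  (H.halfSpace U u v ∩ H.halfSpace V u' v').Nonempty ∧
  (H.halfSpace U u v ∩ H.halfSpace V v' u').Nonempty ∧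
  (H.halfSpace U v u ∩ H.halfSpace V u' v').Nonempty ∧
  (H.halfSpace U v u ∩ H.halfSpace V v' u').Nonempty

/-- Two walls are transverse: none of the four inclusions among their half-spaces and
complements holds. -/
def WallTransverse (H : HFT Idx Vtx F) (U : Idx) (u v : Vtx U) (V : Idx)
    (u' v' : Vtx V) : Prop :=
  ¬ (H.halfSpace U u v ⊆ H.halfSpace V u' v') ∧
  ¬ (H.halfSpace U u v ⊆ H.halfSpace V v' u') ∧
  ¬ (H.halfSpace U v u ⊆ H.halfSpace V u' v') ∧
  ¬ (H.halfSpace U v u ⊆ H.halfSpace V v' u')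

end HFT

variable {Idx : Type*} [Fintype Idx] {Vtx : Idx → Type*} [∀ U, Fintype (Vtx U)]
  {F : Type*} [Fintype F]


open SimpleGraph in
private lemma isPath_append_of_inter {α : Type*} {G : SimpleGraph α} {u v w : α}
    {p : G.Walk u v} {q : G.Walk v w} (hp : p.IsPath) (hq : q.IsPath)
    (h : ∀ x, x ∈ p.support → x ∈ q.support → x = v) : (p.append q).IsPath := by
  rw [SimpleGraph.Walk.isPath_def, SimpleGraph.Walk.support_append, List.nodup_append]
  refine ⟨hp.support_nodup, hq.support_nodup.tail, ?_⟩
  intro x hx y hx' hxy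
  subst hxy
  have hxq : x ∈ q.support := by
    rw [q.support_eq_cons]; exact List.mem_cons_of_mem _ hx'
  have hxv : x = v := h x hx hxq
  subst hxv
  have := hq.support_nodup
  rw [q.support_eq_cons, List.nodup_cons] at this
  exact this.1 hx'

open SimpleGraph in
private lemma exists_tree_median {α : Type*} [Fintype α] {G : SimpleGraph α}
    (hT : G.IsTree) (a b c : α) : ∃ m, IsTreeMedian G a b c m := by
  classical
  have hconn := hT.isConnected
  obtain ⟨p, hp⟩ := hconn.exists_walk_length_eq_dist a b
  have hpp : p.IsPath := p.isPath_of_length_eq_dist hp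
  obtain ⟨m, hmS', hmin'⟩ := p.support.toFinset.exists_min_image
    (fun x => G.dist x c) ⟨a, by simp⟩
  rw [List.mem_toFinset] at hmS'
  have hmin : ∀ x ∈ p.support, G.dist m c ≤ G.dist x c := fun x hx =>
    hmin' x (List.mem_toFinset.mpr hx)
  have hsplit : (p.takeUntil m hmS').length + (p.dropUntil m hmS').length = G.dist a b := by
    have := congrArg SimpleGraph.Walk.length (p.take_spec hmS')
    rwa [SimpleGraph.Walk.length_append, hp] at this
  have h1 : G.dist a m ≤ (p.takeUntil m hmS').length := SimpleGraph.dist_le _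
  have h2 : G.dist m b ≤ (p.dropUntil m hmS').length := SimpleGraph.dist_le _
  have htri : G.dist a b ≤ G.dist a m + G.dist m b := hconn.dist_triangle
  have hab : G.dist a m + G.dist m b = G.dist a b := by omega
  have hta : (p.takeUntil m hmS').length = G.dist a m := by omega
  have htb : (p.dropUntil m hmS').length = G.dist m b := by omega
  obtain ⟨q, hq⟩ := hconn.exists_walk_length_eq_dist m c
  have hqp : q.IsPath := q.isPath_of_length_eq_dist hq
  have key : ∀ x, x ∈ p.support → x ∈ q.support → x = m := by
    intro x hxp hxq
    by_contra hne
    have hs : (q.takeUntil x hxq).length + (q.dropUntil x hxq).length = G.dist m c := by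
      have := congrArg SimpleGraph.Walk.length (q.take_spec hxq)
      rwa [SimpleGraph.Walk.length_append, hq] at this
    have h3 : G.dist m x ≤ (q.takeUntil x hxq).length := SimpleGraph.dist_le _
    have h4 : G.dist x c ≤ (q.dropUntil x hxq).length := SimpleGraph.dist_le _
    have hpos : 0 < G.dist m x := hconn.pos_dist_of_ne (Ne.symm hne)
    have := hmin x hxp
    omega
  have hac : G.dist a m + G.dist m c = G.dist a c := by
    have hP1 : ((p.takeUntil m hmS').append q).IsPath :=
      isPath_append_of_inter (hpp.takeUntil hmS') hqp
        (fun x hx hx' => key x (p.support_takeUntil_subset hmS' hx) hx')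
    obtain ⟨r, hr⟩ := hconn.exists_walk_length_eq_dist a c
    have hrp : r.IsPath := r.isPath_of_length_eq_dist hr
    obtain ⟨r0, -, huniq⟩ := hT.existsUnique_path a c
    have heq : (p.takeUntil m hmS').append q = r := (huniq _ hP1).trans (huniq _ hrp).symm
    have := congrArg SimpleGraph.Walk.length heq
    rw [SimpleGraph.Walk.length_append, hta, hq, hr] at this
    exact this
  have hbc : G.dist m b + G.dist m c = G.dist b c := by
    have hP2 : ((p.dropUntil m hmS').reverse.append q).IsPath := by
      refine isPath_append_of_inter (hpp.dropUntil hmS').reverse hqp ?_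
      intro x hx hx'
      rw [SimpleGraph.Walk.support_reverse, List.mem_reverse] at hx
      exact key x (p.support_dropUntil_subset hmS' hx) hx'
    obtain ⟨r, hr⟩ := hconn.exists_walk_length_eq_dist b c
    have hrp : r.IsPath := r.isPath_of_length_eq_dist hr
    obtain ⟨r0, -, huniq⟩ := hT.existsUnique_path b c
    have heq : (p.dropUntil m hmS').reverse.append q = r :=
      (huniq _ hP2).trans (huniq _ hrp).symm
    have := congrArg SimpleGraph.Walk.length heq
    rw [SimpleGraph.Walk.length_append, SimpleGraph.Walk.length_reverse, htb, hq, hr] at this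
    exact this
  refine ⟨m, hab, hac, ?_⟩
  have e : G.dist b m = G.dist m b := SimpleGraph.dist_comm
  omega

/-- If two of the three inputs of a tree median are equal to `q`, the median is `q`. -/
private lemma median_const {α : Type*} {G : SimpleGraph α} (hconn : G.Connected)
    {a b c m q : α} (h : IsTreeMedian G a b c m)
    (hq : (a = q ∧ b = q) ∨ (a = q ∧ c = q) ∨ (b = q ∧ c = q)) : m = q := by
  obtain ⟨h1, h2, h3⟩ := h
  have h0 : G.dist q q = 0 := SimpleGraph.dist_self
  have e : G.dist q m = G.dist m q := SimpleGraph.dist_comm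
  have hd : G.dist m q = 0 := by
    rcases hq with ⟨ea, eb⟩ | ⟨ea, ec⟩ | ⟨eb, ec⟩
    · rw [ea, eb] at h1; omega
    · rw [ea, ec] at h2; omega
    · rw [eb, ec] at h3; omega
  exact (hconn.dist_eq_zero_iff).mp hd

/-- If the median `m` of `a, b, c` is not the deleted vertex `w`, then at least two of
`a, b, c` lie in the same component of the tree minus `w` as `m`. -/
private lemma median_two_same {α : Type*} {G : SimpleGraph α} (hconn : G.Connected)
    {a b c m w : α} (h : IsTreeMedian G a b c m) (hmw : m ≠ w) :
    (treeSameComp G w a m ∧ treeSameComp G w b m) ∨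
    (treeSameComp G w a m ∧ treeSameComp G w c m) ∨
    (treeSameComp G w b m ∧ treeSameComp G w c m) := by
  have h0 : G.dist m w ≠ 0 := fun hh => hmw ((hconn.dist_eq_zero_iff).mp hh)
  have pair : ∀ x y : α, G.dist x m + G.dist m y = G.dist x y →
      ¬ treeSameComp G w x m → ¬ treeSameComp G w y m → False := by
    intro x y hxy hx hy
    have hx' : x = w ∨ G.dist x w + G.dist w m = G.dist x m := by
      by_cases hxw : x = w
      · exact Or.inl hxw
      · right; by_contra h2; exact hx ⟨hxw, hmw, h2⟩
    have hy' : y = w ∨ G.dist y w + G.dist w m = G.dist y m := by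
      by_cases hyw : y = w
      · exact Or.inl hyw
      · right; by_contra h2; exact hy ⟨hyw, hmw, h2⟩
    have ewm : G.dist w m = G.dist m w := SimpleGraph.dist_comm
    rcases hx' with hxw | hx' <;> rcases hy' with hyw | hy'
    · rw [hxw, hyw] at hxy
      have hs : G.dist w w = 0 := SimpleGraph.dist_self
      omega
    · rw [hxw] at hxy
      have e1 : G.dist y w = G.dist w y := SimpleGraph.dist_comm
      have e2 : G.dist y m = G.dist m y := SimpleGraph.dist_comm
      omega
    · rw [hyw] at hxy
      omega
    · have ht : G.dist x y ≤ G.dist x w + G.dist w y := hconn.dist_triangle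
      have e1 : G.dist y w = G.dist w y := SimpleGraph.dist_comm
      have e2 : G.dist m y = G.dist y m := SimpleGraph.dist_comm
      omega
  obtain ⟨h1, h2, h3⟩ := h
  by_cases sa : treeSameComp G w a m
  · by_cases sb : treeSameComp G w b m
    · exact Or.inl ⟨sa, sb⟩
    · have sc : treeSameComp G w c m := by
        by_contra sc; exact pair b c h3 sb sc
      exact Or.inr (Or.inl ⟨sa, sc⟩)
  · have sb : treeSameComp G w b m := by
      by_contra sb; exact pair a b h1 sa sb
    have sc : treeSameComp G w c m := by
      by_contra sc; exact pair a c h2 sa sc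
    exact Or.inr (Or.inr ⟨sb, sc⟩)


/-- **Closure of the model under coordinatewise medians** (Lemma `Q median`). -/
theorem q_median (H : HFT Idx Vtx F) (a b c : ∀ U, Vtx U)
    (ha : a ∈ H.Q) (hb : b ∈ H.Q) (hc : c ∈ H.Q) :
    (∃ m : ∀ U, Vtx U, ∀ U, IsTreeMedian (H.G U) (a U) (b U) (c U) (m U)) ∧
    ∀ m : ∀ U, Vtx U,
      (∀ U, IsTreeMedian (H.G U) (a U) (b U) (c U) (m U)) → m ∈ H.Q := by
  classical
  have hex : ∀ U, ∃ m, IsTreeMedian (H.G U) (a U) (b U) (c U) m :=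
    fun U => exists_tree_median (H.tree U) _ _ _
  have hconn : ∀ U, (H.G U).Connected := fun U => (H.tree U).isConnected
  constructor
  · exact ⟨fun U => (hex U).choose, fun U => (hex U).choose_spec⟩
  · intro m hm
    constructor
    · intro U V hUV
      rcases ha.1 U V hUV with h1 | h1 <;> rcases hb.1 U V hUV with h2 | h2 <;>
        rcases hc.1 U V hUV with h3 | h3
      · exact Or.inl (median_const (hconn U) (hm U) (Or.inl ⟨h1, h2⟩))
      · exact Or.inl (median_const (hconn U) (hm U) (Or.inl ⟨h1, h2⟩))
      · exact Or.inl (median_const (hconn U) (hm U) (Or.inr (Or.inl ⟨h1, h3⟩)))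
      · exact Or.inr (median_const (hconn V) (hm V) (Or.inr (Or.inr ⟨h2, h3⟩)))
      · exact Or.inl (median_const (hconn U) (hm U) (Or.inr (Or.inr ⟨h2, h3⟩)))
      · exact Or.inr (median_const (hconn V) (hm V) (Or.inr (Or.inl ⟨h1, h3⟩)))
      · exact Or.inr (median_const (hconn V) (hm V) (Or.inl ⟨h1, h2⟩))
      · exact Or.inr (median_const (hconn V) (hm V) (Or.inl ⟨h1, h2⟩))
    · intro U V hVU
      by_cases hmu : m U = H.δup V U
      · exact Or.inl hmu
      · right
        rcases median_two_same (hconn U) (hm U) hmu with ⟨s1, s2⟩ | ⟨s1, s2⟩ | ⟨s1, s2⟩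
        · have e1 : a V = H.δdown U V (a U) := (ha.2 U V hVU).resolve_left s1.1
          have e2 : b V = H.δdown U V (b U) := (hb.2 U V hVU).resolve_left s2.1
          have f1 : H.δdown U V (a U) = H.δdown U V (m U) := H.bgi_const U V hVU _ _ s1
          have f2 : H.δdown U V (b U) = H.δdown U V (m U) := H.bgi_const U V hVU _ _ s2
          exact median_const (hconn V) (hm V) (Or.inl ⟨e1.trans f1, e2.trans f2⟩)
        · have e1 : a V = H.δdown U V (a U) := (ha.2 U V hVU).resolve_left s1.1
          have e2 : c V = H.δdown U V (c U) := (hc.2 U V hVU).resolve_left s2.1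
          have f1 : H.δdown U V (a U) = H.δdown U V (m U) := H.bgi_const U V hVU _ _ s1
          have f2 : H.δdown U V (c U) = H.δdown U V (m U) := H.bgi_const U V hVU _ _ s2
          exact median_const (hconn V) (hm V) (Or.inr (Or.inl ⟨e1.trans f1, e2.trans f2⟩))
        · have e1 : b V = H.δdown U V (b U) := (hb.2 U V hVU).resolve_left s1.1
          have e2 : c V = H.δdown U V (c U) := (hc.2 U V hVU).resolve_left s2.1
          have f1 : H.δdown U V (b U) = H.δdown U V (m U) := H.bgi_const U V hVU _ _ s1
          have f2 : H.δdown U V (c U) = H.δdown U V (m U) := H.bgi_const U V hVU _ _ s2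
          exact median_const (hconn V) (hm V) (Or.inr (Or.inr ⟨e1.trans f1, e2.trans f2⟩))
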